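/- Let f(q₂,q₃,q₄) = cos(q₂) + cos(q₃) + cos(q₄) + cos(q₂+q₃) + cos(q₃+q₄). Along the curve c(t) = (π+t, -2t, π+t), one has f(c(t)) - f(π,0,π) = O(t⁴) as t → 0; more precisely the first, second and third derivatives of t ↦ f(c(t)) vanish at t = 0 while the fourth derivative is nonzero, so (π,0,π) is a degenerate minimizer of f along this direction with quartic growth. -/

import Mathlib

open Real

/-- For `f(q₂,q₃,q₄) = cos q₂ + cos q₃ + cos q₄ + cos(q₂+q₃) + cos(q₃+q₄)` and the
curve `c(t) = (π+t, -2t, π+t)`, the function `φ(t) = f(c(t))` satisfies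
`φ'(0) = φ''(0) = φ'''(0) = 0` and `φ''''(0) ≠ 0`, and
`f(c(t)) - f(π,0,π) = O(t⁴)` as `t → 0`: `(π,0,π)` is a degenerate minimizer of
`f` along this direction with quartic growth. -/
theorem stmt5 (f : ℝ → ℝ → ℝ → ℝ)
    (hf : ∀ q₂ q₃ q₄, f q₂ q₃ q₄ =
      Real.cos q₂ + Real.cos q₃ + Real.cos q₄ + Real.cos (q₂ + q₃) +
        Real.cos (q₃ + q₄))
    (φ : ℝ → ℝ) (hφ : ∀ t, φ t = f (π + t) (-2 * t) (π + t)) :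
    iteratedDeriv 1 φ 0 = 0 ∧ iteratedDeriv 2 φ 0 = 0 ∧
    iteratedDeriv 3 φ 0 = 0 ∧ iteratedDeriv 4 φ 0 ≠ 0 ∧
    (fun t : ℝ => φ t - f π 0 π) =O[nhds 0] (fun t : ℝ => t ^ 4) := by
  have hφ' : φ = fun t => Real.cos (2 * t) - 4 * Real.cos t := by
    funext t
    rw [hφ, hf]
    have e1 : π + t + -2 * t = π + (-t) := by ring
    have e2 : -2 * t + (π + t) = π + (-t) := by ring
    have e3 : (-2 : ℝ) * t = -(2 * t) := by ring
    rw [e1, e2, e3, Real.cos_neg]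
    simp [Real.cos_add, Real.cos_pi, Real.sin_pi, Real.cos_neg]
    ring
  have d1 : ∀ t : ℝ, HasDerivAt (fun t => Real.cos (2 * t) - 4 * Real.cos t)
      (-2 * Real.sin (2 * t) + 4 * Real.sin t) t := by
    intro t
    have h1 : HasDerivAt (fun t : ℝ => Real.cos (2 * t)) (-Real.sin (2 * t) * 2) t :=
      (Real.hasDerivAt_cos (2 * t)).comp t (by simpa using (hasDerivAt_id t).const_mul 2)
    have h2 := (Real.hasDerivAt_cos t).const_mul 4
    exact (h1.sub h2).congr_deriv (by ring)
  have d2 : ∀ t : ℝ, HasDerivAt (fun t => -2 * Real.sin (2 * t) + 4 * Real.sin t)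
      (-4 * Real.cos (2 * t) + 4 * Real.cos t) t := by
    intro t
    have h1 : HasDerivAt (fun t : ℝ => Real.sin (2 * t)) (Real.cos (2 * t) * 2) t :=
      (Real.hasDerivAt_sin (2 * t)).comp t (by simpa using (hasDerivAt_id t).const_mul 2)
    have h2 := (Real.hasDerivAt_sin t).const_mul 4
    exact ((h1.const_mul (-2)).add h2).congr_deriv (by ring)
  have d3 : ∀ t : ℝ, HasDerivAt (fun t => -4 * Real.cos (2 * t) + 4 * Real.cos t)
      (8 * Real.sin (2 * t) - 4 * Real.sin t) t := by
    intro t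
    have h1 : HasDerivAt (fun t : ℝ => Real.cos (2 * t)) (-Real.sin (2 * t) * 2) t :=
      (Real.hasDerivAt_cos (2 * t)).comp t (by simpa using (hasDerivAt_id t).const_mul 2)
    have h2 := (Real.hasDerivAt_cos t).const_mul 4
    exact ((h1.const_mul (-4)).add h2).congr_deriv (by ring)
  have d4 : ∀ t : ℝ, HasDerivAt (fun t => 8 * Real.sin (2 * t) - 4 * Real.sin t)
      (16 * Real.cos (2 * t) - 4 * Real.cos t) t := by
    intro t
    have h1 : HasDerivAt (fun t : ℝ => Real.sin (2 * t)) (Real.cos (2 * t) * 2) t :=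
      (Real.hasDerivAt_sin (2 * t)).comp t (by simpa using (hasDerivAt_id t).const_mul 2)
    have h2 := (Real.hasDerivAt_sin t).const_mul 4
    exact ((h1.const_mul 8).sub h2).congr_deriv (by ring)
  have e1 : deriv φ = fun t => -2 * Real.sin (2 * t) + 4 * Real.sin t := by
    rw [hφ']; funext t; exact (d1 t).deriv
  have e2 : deriv (fun t => -2 * Real.sin (2 * t) + 4 * Real.sin t) =
      fun t => -4 * Real.cos (2 * t) + 4 * Real.cos t := funext fun t => (d2 t).deriv
  have e3 : deriv (fun t => -4 * Real.cos (2 * t) + 4 * Real.cos t) =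
      fun t => 8 * Real.sin (2 * t) - 4 * Real.sin t := funext fun t => (d3 t).deriv
  have e4 : deriv (fun t => 8 * Real.sin (2 * t) - 4 * Real.sin t) =
      fun t => 16 * Real.cos (2 * t) - 4 * Real.cos t := funext fun t => (d4 t).deriv
  have i1 : iteratedDeriv 1 φ = fun t => -2 * Real.sin (2 * t) + 4 * Real.sin t := by
    rw [iteratedDeriv_one, e1]
  have i2 : iteratedDeriv 2 φ = fun t => -4 * Real.cos (2 * t) + 4 * Real.cos t := by
    rw [iteratedDeriv_succ, i1, e2]
  have i3 : iteratedDeriv 3 φ = fun t => 8 * Real.sin (2 * t) - 4 * Real.sin t := by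
    rw [iteratedDeriv_succ, i2, e3]
  have i4 : iteratedDeriv 4 φ = fun t => 16 * Real.cos (2 * t) - 4 * Real.cos t := by
    rw [iteratedDeriv_succ, i3, e4]
  refine ⟨by simp [i1], by simp [i2], by simp [i3], by simp [i4]; norm_num, ?_⟩
  have hfv : f π 0 π = -3 := by rw [hf]; simp; ring
  rw [hfv]
  apply Asymptotics.IsBigO.of_bound (1 / 2)
  filter_upwards with t
  have key : φ t - (-3) = 8 * Real.sin (t / 2) ^ 4 := by
    rw [hφ']
    have h2 : Real.cos t = 1 - 2 * Real.sin (t / 2) ^ 2 := by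
      have := Real.cos_two_mul' (t / 2)
      have hs := Real.sin_sq_add_cos_sq (t / 2)
      rw [show 2 * (t / 2) = t by ring] at this
      nlinarith
    have h1 : Real.cos (2 * t) = 2 * Real.cos t ^ 2 - 1 := Real.cos_two_mul t
    show Real.cos (2 * t) - 4 * Real.cos t - (-3) = 8 * Real.sin (t / 2) ^ 4
    rw [h1, h2]; ring
  rw [key]
  have hs : |Real.sin (t / 2)| ≤ |t / 2| := Real.abs_sin_le_abs
  have h4 : Real.sin (t / 2) ^ 4 ≤ (t / 2) ^ 4 := by
    have := pow_le_pow_left₀ (abs_nonneg _) hs 4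
    simpa [abs_pow, pow_abs] using (by
      calc Real.sin (t / 2) ^ 4 = |Real.sin (t / 2)| ^ 4 := by
            rw [← abs_pow, abs_of_nonneg (by positivity)]
        _ ≤ |t / 2| ^ 4 := pow_le_pow_left₀ (abs_nonneg _) hs 4
        _ = (t / 2) ^ 4 := by rw [← abs_pow, abs_of_nonneg (by positivity)])
  have hnn : (0 : ℝ) ≤ Real.sin (t / 2) ^ 4 := by positivity
  rw [Real.norm_eq_abs, Real.norm_eq_abs, abs_of_nonneg (by positivity : (0:ℝ) ≤ 8 * Real.sin (t/2) ^ 4)]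
  calc 8 * Real.sin (t / 2) ^ 4 ≤ 8 * (t / 2) ^ 4 := by linarith
    _ = 1 / 2 * t ^ 4 := by ring
    _ ≤ 1 / 2 * |t ^ 4| := by
        have : t ^ 4 ≤ |t ^ 4| := le_abs_self _
        linarith
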